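/- Let F : C ⥤ D be a strong symmetric monoidal functor between symmetric monoidal categories, let X be a dualizable object of C, and let Y be an object of C. If Y is F-colocal, then X ⊗ Y is F-colocal. -/

import Mathlib

/-!
Let `F : C ⥤ D` be a strong symmetric monoidal functor between symmetric monoidal categories
(encoded by `[F.Braided]`, which includes a strong monoidal structure compatible with the
braidings/symmetries), let `X` be a dualizable object of `C` (encoded by `[HasRightDual X]`,
i.e. there is `X^∨` with evaluation `X^∨ ⊗ X ⟶ 𝟙` and coevaluation `𝟙 ⟶ X ⊗ X^∨` satisfying
the triangle identities), and let `Y : C`.  If `Y` is `F`-colocal, then `X ⊗ Y` is `F`-colocal.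
-/

open CategoryTheory MonoidalCategory

universe v₁ v₂ u₁ u₂

/-- `X` is `F`-colocal if `F` induces a bijection `Hom(X, Y) → Hom(F X, F Y)` for all `Y`. -/
def Colocal {C : Type u₁} {D : Type u₂} [Category.{v₁} C] [Category.{v₂} D]
    (F : C ⥤ D) (X : C) : Prop :=
  ∀ Y : C, Function.Bijective (fun f : X ⟶ Y => F.map f)

namespace Stmt9Aux

open Functor.LaxMonoidal Functor.OplaxMonoidal

variable {C : Type u₁} {D : Type u₂} [Category.{v₁} C] [Category.{v₂} D]
  [MonoidalCategory C] [MonoidalCategory D] (F : C ⥤ D) [F.Monoidal]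

/-- A monoidal functor sends exact pairings to exact pairings. -/
def mapExactPairing (X Y : C) [ExactPairing X Y] :
    ExactPairing (F.obj X) (F.obj Y) where
  coevaluation' := ε F ≫ F.map (η_ X Y) ≫ δ F X Y
  evaluation' := μ F Y X ≫ F.map (ε_ X Y) ≫ η F
  coevaluation_evaluation' := by
    have h := congrArg F.map (ExactPairing.coevaluation_evaluation X Y)
    simp only [F.map_comp, Functor.Monoidal.map_whiskerLeft,
      Functor.Monoidal.map_whiskerRight, Functor.Monoidal.map_associator_inv,
      Functor.Monoidal.map_rightUnitor, Functor.Monoidal.map_leftUnitor_inv,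
      Category.assoc, Functor.Monoidal.μ_δ_assoc] at h
    have h2 := (cancel_epi (δ F Y (𝟙_ C))).mp h
    simp only [MonoidalCategory.whiskerLeft_comp, comp_whiskerRight, Category.assoc]
    simp only [← Category.assoc] at h2
    replace h2 := (cancel_mono _).mp h2
    simp only [Category.assoc] at h2
    rw [reassoc_of% h2]
    simp
  evaluation_coevaluation' := by
    have h := congrArg F.map (ExactPairing.evaluation_coevaluation X Y)
    simp only [F.map_comp, Functor.Monoidal.map_whiskerLeft,
      Functor.Monoidal.map_whiskerRight, Functor.Monoidal.map_associator,
      Functor.Monoidal.map_rightUnitor_inv, Functor.Monoidal.map_leftUnitor,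
      Category.assoc, Functor.Monoidal.μ_δ_assoc] at h
    have h2 := (cancel_epi (δ F (𝟙_ C) X)).mp h
    simp only [MonoidalCategory.whiskerLeft_comp, comp_whiskerRight, Category.assoc]
    simp only [← Category.assoc] at h2
    replace h2 := (cancel_mono _).mp h2
    simp only [Category.assoc] at h2
    rw [reassoc_of% h2]
    simp

/-- Compatibility of `tensorRightHomEquiv` with a monoidal functor. -/
lemma key (X Y Z W : C) [ExactPairing X Y] (g : W ⊗ X ⟶ Z) :
    (@tensorRightHomEquiv D _ _ (F.obj W) (F.obj X) (F.obj Y) (F.obj Z)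
        (mapExactPairing F X Y)) (μ F W X ≫ F.map g) =
      F.map ((tensorRightHomEquiv W X Y Z) g) ≫ δ F Z Y := by
  simp only [tensorRightHomEquiv, Equiv.coe_fn_mk, ExactPairing.coevaluation,
    mapExactPairing, F.map_comp, Functor.Monoidal.map_whiskerLeft,
    Functor.Monoidal.map_whiskerRight, Functor.Monoidal.map_associator_inv,
    Functor.Monoidal.map_rightUnitor_inv, MonoidalCategory.whiskerLeft_comp, Category.assoc]
  rw [show (mapExactPairing F X Y).coevaluation' = ε F ≫ F.map (η_ X Y) ≫ δ F X Y from rfl]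
  simp only [MonoidalCategory.whiskerLeft_comp, Category.assoc]
  simp only [Functor.Monoidal.μ_δ_assoc, Functor.Monoidal.μ_δ, comp_whiskerRight,
    Category.assoc, Category.comp_id]
  rfl

end Stmt9Aux

open Functor.LaxMonoidal Functor.OplaxMonoidal in
theorem stmt9 {C : Type u₁} {D : Type u₂} [Category.{v₁} C] [Category.{v₂} D]
    [MonoidalCategory C] [SymmetricCategory C] [MonoidalCategory D] [SymmetricCategory D]
    (F : C ⥤ D) [F.Braided]
    (X Y : C) [HasRightDual X] (hY : Colocal F Y) :
    Colocal F (X ⊗ Y) := by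
  intro Z
  letI E : ExactPairing (F.obj X) (F.obj Xᘁ) := Stmt9Aux.mapExactPairing F X Xᘁ
  let eC : (Y ⊗ X ⟶ Z) ≃ (Y ⟶ Z ⊗ Xᘁ) := tensorRightHomEquiv Y X Xᘁ Z
  let eD : (F.obj Y ⊗ F.obj X ⟶ F.obj Z) ≃ (F.obj Y ⟶ F.obj Z ⊗ F.obj Xᘁ) :=
    tensorRightHomEquiv (F.obj Y) (F.obj X) (F.obj Xᘁ) (F.obj Z)
  let bC : (X ⊗ Y ⟶ Z) ≃ (Y ⊗ X ⟶ Z) :=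
    (β_ Y X).symm.homCongr (Iso.refl Z)
  let iD : F.obj Y ⊗ F.obj X ≅ F.obj (X ⊗ Y) :=
    β_ (F.obj Y) (F.obj X) ≪≫ Functor.Monoidal.μIso F X Y
  let bD : (F.obj (X ⊗ Y) ⟶ F.obj Z) ≃ (F.obj Y ⊗ F.obj X ⟶ F.obj Z) :=
    iD.symm.homCongr (Iso.refl (F.obj Z))
  let E1 : (X ⊗ Y ⟶ Z) ≃ (Y ⟶ Z ⊗ Xᘁ) := bC.trans eC
  let E2 : (F.obj (X ⊗ Y) ⟶ F.obj Z) ≃ (F.obj Y ⟶ F.obj Z ⊗ F.obj Xᘁ) := bD.trans eD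
  have hmid : Function.Bijective (fun h : Y ⟶ Z ⊗ Xᘁ => F.map h ≫ δ F Z Xᘁ) := by
    constructor
    · intro a b hab
      exact (hY (Z ⊗ Xᘁ)).1 ((cancel_mono (δ F Z Xᘁ)).mp hab)
    · intro g
      obtain ⟨h, hh⟩ := (hY (Z ⊗ Xᘁ)).2 (g ≫ μ F Z Xᘁ)
      exact ⟨h, by simp [hh]⟩
  have hmain : ∀ f : X ⊗ Y ⟶ Z, E2 (F.map f) = F.map (E1 f) ≫ δ F Z Xᘁ := by
    intro f
    have h1 : iD.hom ≫ F.map f = μ F Y X ≫ F.map ((β_ Y X).hom ≫ f) := by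
      simp only [iD, Iso.trans_hom, Category.assoc, F.map_comp, Functor.Monoidal.μIso]
      rw [← Category.assoc, ← Functor.LaxBraided.braided, Category.assoc]
    have h2 : E2 (F.map f) = eD (μ F Y X ≫ F.map ((β_ Y X).hom ≫ f)) := by
      simp only [E2, bD, Equiv.trans_apply, Iso.homCongr_apply, Iso.symm_symm_eq,
        Iso.refl_hom, Category.comp_id, Iso.symm_inv]
      rw [← h1]
    have h3 : E1 f = eC ((β_ Y X).hom ≫ f) := by
      simp [E1, bC, eC]
    rw [h2, h3, Stmt9Aux.key]
  have heq : (fun f : X ⊗ Y ⟶ Z => F.map f)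
      = E2.symm ∘ (fun h : Y ⟶ Z ⊗ Xᘁ => F.map h ≫ δ F Z Xᘁ) ∘ E1 := by
    funext f
    simp only [Function.comp_apply]
    rw [← hmain f, Equiv.symm_apply_apply]
  rw [heq]
  exact E2.symm.bijective.comp (hmid.comp E1.bijective)
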